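/- There exists an absolute constant C > 0 with the following property: for every finite group G and every nonempty subset A ⊆ G, the number of A-free subsets of G does not exceed 2^{(1/2 + C·|A|^{−1/10})·|G|}. -/

import Mathlib

open Finset Pointwise

section AlonHelpers

variable {G : Type} [Group G] [Fintype G] [DecidableEq G]

/-- The "dominated" set for a fingerprint `F`: elements outside `F * A` most of whose
(out-)neighborhood `v • A` is already covered by `F * A`. -/
def Dset (A : Finset G) (t : ℕ) (F : Finset G) : Finset G :=
  univ.filter (fun v => v ∉ F * A ∧ A.card - t ≤ ((v • A) ∩ (F * A)).card)

lemma exists_fingerprint (A : Finset G) (t : ℕ) (S : Finset G)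
    (hS : ∀ s₁ ∈ S, ∀ a ∈ A, s₁ * a ∉ S) :
    ∃ F, F ⊆ S ∧ t * F.card ≤ (F * A).card ∧ S ⊆ F ∪ Dset A t F := by
  obtain ⟨F, hFmem, hFmax⟩ := S.powerset.exists_max_image
    (fun F => ((F * A).card : ℤ) - t * F.card) ⟨∅, by simp⟩
  rw [mem_powerset] at hFmem
  refine ⟨F, hFmem, ?_, ?_⟩
  · have h0 := hFmax ∅ (by simp)
    simp only [empty_mul, card_empty, Nat.cast_zero, mul_zero, sub_zero] at h0
    have : (t * F.card : ℤ) ≤ ((F * A).card : ℤ) := by linarith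
    exact_mod_cast this
  · intro v hv
    by_cases hvF : v ∈ F
    · exact mem_union_left _ hvF
    refine mem_union_right _ ?_
    have hvFA : v ∉ F * A := by
      intro hmem
      rw [mem_mul] at hmem
      obtain ⟨y, hy, z, hz, hyz⟩ := hmem
      exact hS y (hFmem hy) z hz (hyz ▸ hv)
    have hins := hFmax (insert v F) (by rw [mem_powerset]; exact insert_subset hv hFmem)
    rw [insert_eq, union_mul, singleton_mul, ← insert_eq, card_insert_of_notMem hvF] at hins
    have hcard : ((v • A) ∪ F * A).card = ((v • A) \ (F * A)).card + (F * A).card :=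
      (card_sdiff_add_card _ _).symm
    rw [hcard] at hins
    push_cast at hins
    have hsd : (((v • A) \ (F * A)).card : ℤ) ≤ t := by linarith
    have hsd' : ((v • A) \ (F * A)).card ≤ t := by exact_mod_cast hsd
    have hinter : A.card - t ≤ ((v • A) ∩ (F * A)).card := by
      have := card_inter_add_card_sdiff (v • A) (F * A)
      rw [card_smul_finset] at this
      omega
    simp [Dset, hvFA]
    omega

omit [Fintype G] in
lemma inter_card_eq (A : Finset G) (F : Finset G) (v : G) :
    ((v • A) ∩ (F * A)).card = (A.filter (fun a => v * a ∈ F * A)).card := by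
  have himg : (v • A) ∩ (F * A) = (A.filter (fun a => v * a ∈ F * A)).image (fun a => v * a) := by
    ext x
    simp only [mem_inter, mem_image, mem_filter, mem_smul_finset, smul_eq_mul]
    constructor
    · rintro ⟨⟨y, hy, rfl⟩, hx⟩
      exact ⟨y, ⟨hy, hx⟩, rfl⟩
    · rintro ⟨y, ⟨hy, hmem⟩, rfl⟩
      exact ⟨⟨y, hy, rfl⟩, hmem⟩
  rw [himg, card_image_of_injective _ (mul_right_injective v)]

lemma Dset_card_bound (A : Finset G) (t : ℕ) (F : Finset G) (ht : t ≤ A.card) :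
    (Dset A t F).card * (2 * A.card - t) ≤ A.card * Fintype.card G := by
  set k := A.card with hk
  set n := Fintype.card G with hn
  set m := (F * A).card with hm
  have hmn : m ≤ n := by rw [hn, ← card_univ]; exact card_le_card (subset_univ _)
  have h1 : (Dset A t F).card • (k - t) ≤ ∑ v ∈ Dset A t F, ((v • A) ∩ (F * A)).card := by
    apply Finset.card_nsmul_le_sum
    intro v hv
    simp only [Dset, mem_filter] at hv
    exact hv.2.2
  have h2 : ∑ v ∈ Dset A t F, ((v • A) ∩ (F * A)).card ≤ k * m := by
    calc ∑ v ∈ Dset A t F, ((v • A) ∩ (F * A)).card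
        = ∑ v ∈ Dset A t F, ∑ a ∈ A, (if v * a ∈ F * A then 1 else 0) := by
          refine Finset.sum_congr rfl (fun v _ => ?_)
          rw [inter_card_eq, card_filter]
      _ = ∑ a ∈ A, ∑ v ∈ Dset A t F, (if v * a ∈ F * A then 1 else 0) := Finset.sum_comm
      _ = ∑ a ∈ A, ((Dset A t F).filter (fun v => v * a ∈ F * A)).card := by
          refine Finset.sum_congr rfl (fun a _ => ?_)
          rw [card_filter]
      _ ≤ ∑ a ∈ A, m := by
          refine Finset.sum_le_sum (fun a _ => ?_)
          apply Finset.card_le_card_of_injOn (fun v => v * a)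
          · intro v hv
            exact (mem_filter.mp hv).2
          · intro x _ y _ hxy
            exact mul_right_cancel hxy
      _ = k * m := by rw [Finset.sum_const, smul_eq_mul]
  have h3 : (Dset A t F).card * (k - t) ≤ k * m := by
    rw [← smul_eq_mul]; exact le_trans h1 h2
  have h4 : (Dset A t F).card ≤ n - m := by
    have hsub : Dset A t F ⊆ (F * A)ᶜ := by
      intro v hv
      simp only [Dset, mem_filter] at hv
      simp [hv.2.1]
    calc (Dset A t F).card ≤ ((F * A)ᶜ).card := card_le_card hsub
      _ = n - m := by rw [card_compl, hm, hn]
  set D := (Dset A t F).card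
  have e0 : 2 * k - t = (k - t) + k := by omega
  have e2 : D * k ≤ (n - m) * k := Nat.mul_le_mul_right _ h4
  calc D * (2 * k - t) = D * (k - t) + D * k := by rw [e0, Nat.mul_add]
    _ ≤ k * m + (n - m) * k := Nat.add_le_add h3 e2
    _ = k * n := by rw [mul_comm k m, ← Nat.add_mul, Nat.add_sub_cancel' hmn, mul_comm]
    _ = k * Fintype.card G := by rw [hn]

lemma count_le_sum (A : Finset G) (t : ℕ) (ht : 0 < t) :
    ((univ.powerset.filter
        (fun S : Finset G => ∀ s₁ ∈ S, ∀ a ∈ A, s₁ * a ∉ S)).card : ℕ) ≤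
      ∑ F ∈ univ.powerset.filter (fun F : Finset G => F.card ≤ Fintype.card G / t),
        2 ^ (Dset A t F).card := by
  set s := Fintype.card G / t with hs
  set SS := univ.powerset.filter (fun S : Finset G => ∀ s₁ ∈ S, ∀ a ∈ A, s₁ * a ∉ S) with hSS
  set Pf := univ.powerset.filter (fun F : Finset G => F.card ≤ s) with hPf
  have hcover : SS ⊆ Pf.biUnion (fun F => SS.filter (fun S => F ⊆ S ∧ S \ F ⊆ Dset A t F)) := by
    intro S hSmem
    have hSfree : ∀ s₁ ∈ S, ∀ a ∈ A, s₁ * a ∉ S := (mem_filter.mp hSmem).2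
    obtain ⟨F, hFS, hFcard, hFcont⟩ := exists_fingerprint A t S hSfree
    rw [mem_biUnion]
    refine ⟨F, ?_, ?_⟩
    · rw [hPf, mem_filter, mem_powerset]
      refine ⟨subset_univ _, ?_⟩
      rw [hs, Nat.le_div_iff_mul_le ht, mul_comm]
      exact le_trans hFcard (le_trans (card_le_card (subset_univ _)) (by rw [card_univ]))
    · rw [mem_filter]
      refine ⟨hSmem, hFS, ?_⟩
      intro v hv
      rw [mem_sdiff] at hv
      rcases mem_union.mp (hFcont hv.1) with h | h
      · exact absurd h hv.2
      · exact h
  calc SS.card ≤ (Pf.biUnion (fun F => SS.filter (fun S => F ⊆ S ∧ S \ F ⊆ Dset A t F))).card :=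
        card_le_card hcover
    _ ≤ ∑ F ∈ Pf, (SS.filter (fun S => F ⊆ S ∧ S \ F ⊆ Dset A t F)).card := card_biUnion_le
    _ ≤ ∑ F ∈ Pf, 2 ^ (Dset A t F).card := by
        refine Finset.sum_le_sum (fun F _ => ?_)
        rw [← card_powerset]
        apply Finset.card_le_card_of_injOn (fun S => S \ F)
        · intro S hSmem
          rw [mem_coe, mem_filter] at hSmem
          rw [mem_coe, mem_powerset]
          exact hSmem.2.2
        · intro S₁ h₁ S₂ h₂ heq
          rw [mem_coe, mem_filter] at h₁ h₂
          have e₁ := union_sdiff_of_subset h₁.2.1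
          have e₂ := union_sdiff_of_subset h₂.2.1
          simp only [] at heq
          rw [← e₁, ← e₂, heq]

end AlonHelpers

lemma sum_choose_le (n s t : ℕ) (ht : 0 < t) (hsn : s ≤ n) :
    (∑ j ∈ range (s + 1), (n.choose j : ℝ)) ≤ (t : ℝ) ^ s * (1 + 1 / t) ^ n := by
  set x : ℝ := 1 / t with hx
  have hx0 : 0 < x := by positivity
  have hx1 : x ≤ 1 := by
    rw [hx, div_le_one (by positivity)]
    exact_mod_cast ht
  have key : (∑ j ∈ range (s + 1), (n.choose j : ℝ)) * x ^ s ≤ (x + 1) ^ n := by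
    rw [Finset.sum_mul]
    calc ∑ j ∈ range (s + 1), (n.choose j : ℝ) * x ^ s
        ≤ ∑ j ∈ range (s + 1), (n.choose j : ℝ) * x ^ j := by
          refine Finset.sum_le_sum (fun j hj => ?_)
          have hj' : j ≤ s := Nat.lt_succ_iff.mp (mem_range.mp hj)
          exact mul_le_mul_of_nonneg_left
            (pow_le_pow_of_le_one hx0.le hx1 hj') (by positivity)
      _ ≤ ∑ j ∈ range (n + 1), (n.choose j : ℝ) * x ^ j := by
          refine Finset.sum_le_sum_of_subset_of_nonneg ?_ (fun j _ _ => by positivity)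
          exact Finset.range_subset_range.mpr (by omega)
      _ = (x + 1) ^ n := by
          rw [add_pow]
          refine Finset.sum_congr rfl (fun j hj => ?_)
          ring
  have hxt : x ^ s * (t : ℝ) ^ s = 1 := by
    rw [← mul_pow, hx]
    field_simp
    exact one_pow s
  calc (∑ j ∈ range (s + 1), (n.choose j : ℝ))
      = (∑ j ∈ range (s + 1), (n.choose j : ℝ)) * x ^ s * (t : ℝ) ^ s := by
        rw [mul_assoc, hxt, mul_one]
    _ ≤ (x + 1) ^ n * (t : ℝ) ^ s := by
        exact mul_le_mul_of_nonneg_right key (by positivity)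
    _ = (t : ℝ) ^ s * (1 + 1 / t) ^ n := by rw [mul_comm, hx, add_comm]

lemma Pf_card_le {G : Type} [Fintype G] [DecidableEq G] (s : ℕ) :
    ((univ.powerset.filter (fun F : Finset G => F.card ≤ s)).card : ℝ) ≤
      ∑ j ∈ range (s + 1), ((Fintype.card G).choose j : ℝ) := by
  have h : univ.powerset.filter (fun F : Finset G => F.card ≤ s) ⊆
      (range (s + 1)).biUnion (fun j => powersetCard j (univ : Finset G)) := by
    intro F hF
    rw [mem_filter] at hF
    rw [mem_biUnion]
    exact ⟨F.card, mem_range.mpr (Nat.lt_succ_of_le hF.2),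
      mem_powersetCard.mpr ⟨subset_univ _, rfl⟩⟩
  calc ((univ.powerset.filter (fun F : Finset G => F.card ≤ s)).card : ℝ)
      ≤ (((range (s + 1)).biUnion (fun j => powersetCard j (univ : Finset G))).card : ℝ) := by
        exact_mod_cast card_le_card h
    _ ≤ ∑ j ∈ range (s + 1), ((Fintype.card G).choose j : ℝ) := by
        have := card_biUnion_le (s := range (s + 1))
          (t := fun j => powersetCard j (univ : Finset G))
        calc (((range (s + 1)).biUnion (fun j => powersetCard j (univ : Finset G))).card : ℝ)
            ≤ ((∑ j ∈ range (s + 1), (powersetCard j (univ : Finset G)).card : ℕ) : ℝ) := by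
              exact_mod_cast this
          _ = ∑ j ∈ range (s + 1), ((Fintype.card G).choose j : ℝ) := by
              push_cast
              refine Finset.sum_congr rfl (fun j _ => ?_)
              rw [card_powersetCard, card_univ]

set_option maxHeartbeats 1000000 in
lemma exponent_bound (K N T S : ℝ) (hK : 2 ≤ K) (hN : 0 ≤ N) (hTK : T ≤ K)
    (hT1 : Real.sqrt K ≤ T) (hT2 : T ≤ 2 * Real.sqrt K) (hS0 : 0 ≤ S) (hS : S * T ≤ N) :
    S * Real.logb 2 T + N * Real.logb 2 (1 + 1 / T) + K * N / (2 * K - T)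
      ≤ (1 / 2 + 8 * K ^ (-(1 / 10) : ℝ)) * N := by
  have hK0 : (0:ℝ) < K := by linarith
  have hsqrtpos : 0 < Real.sqrt K := Real.sqrt_pos.mpr hK0
  have hT0 : (1:ℝ) ≤ T := le_trans (Real.one_le_sqrt.mpr (by linarith)) hT1
  have hTpos : (0:ℝ) < T := by linarith
  set R : ℝ := K ^ (-(1 / 10) : ℝ) with hRdef
  have hR0 : 0 < R := Real.rpow_pos_of_pos hK0 _
  have hsqrt_rpow : Real.sqrt K = K ^ ((1:ℝ)/2) := Real.sqrt_eq_rpow K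
  have hhalf : K ^ (-(1/2) : ℝ) ≤ R := by
    apply Real.rpow_le_rpow_of_exponent_le (by linarith)
    norm_num
  have hinvT : 1 / T ≤ K ^ (-(1/2) : ℝ) := by
    have h1 : 1 / T ≤ 1 / Real.sqrt K := by
      apply one_div_le_one_div_of_le hsqrtpos hT1
    have h2 : 1 / Real.sqrt K = K ^ (-(1/2) : ℝ) := by
      rw [hsqrt_rpow, one_div, Real.rpow_neg hK0.le]
    linarith [h1, h2.le]
  have hTK2 : T / (2 * K) ≤ K ^ (-(1/2) : ℝ) := by
    have h1 : T / (2 * K) ≤ Real.sqrt K / K := by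
      rw [div_le_div_iff₀ (by linarith) hK0]
      calc T * K ≤ 2 * Real.sqrt K * K := by nlinarith
        _ = Real.sqrt K * (2 * K) := by ring
    have h2 : Real.sqrt K / K = K ^ (-(1/2) : ℝ) := by
      rw [hsqrt_rpow, div_eq_mul_inv,
        show (K:ℝ)⁻¹ = K ^ (-1:ℝ) from (Real.rpow_neg_one K).symm,
        ← Real.rpow_add hK0]
      norm_num
    linarith [h1, h2.le]
  have hlog2 : (1:ℝ)/2 < Real.log 2 := by
    have := Real.log_two_gt_d9
    linarith
  have hlog2lt : Real.log 2 < 1 := by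
    have := Real.log_two_lt_d9
    linarith
  have hlogK0 : 0 ≤ Real.log K := Real.log_nonneg (by linarith)
  have hlogT0 : 0 ≤ Real.log T := Real.log_nonneg hT0
  have hlogT : Real.log T ≤ 1 + Real.log K / 2 := by
    calc Real.log T ≤ Real.log (2 * Real.sqrt K) := Real.log_le_log hTpos hT2
      _ = Real.log 2 + Real.log (Real.sqrt K) := Real.log_mul (by norm_num) (by positivity)
      _ = Real.log 2 + Real.log K / 2 := by rw [Real.log_sqrt hK0.le]
      _ ≤ 1 + Real.log K / 2 := by linarith
  have hlogK : Real.log K ≤ (5/2) * K ^ ((2:ℝ)/5) := by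
    have h1 : Real.log (K ^ ((2:ℝ)/5)) = (2/5) * Real.log K := Real.log_rpow hK0 _
    have h2 : Real.log (K ^ ((2:ℝ)/5)) ≤ K ^ ((2:ℝ)/5) - 1 :=
      Real.log_le_sub_one_of_pos (Real.rpow_pos_of_pos hK0 _)
    nlinarith [Real.rpow_pos_of_pos hK0 ((2:ℝ)/5)]
  have hmix : K ^ (-(1/2) : ℝ) * K ^ ((2:ℝ)/5) = R := by
    rw [hRdef, ← Real.rpow_add hK0]
    norm_num
  have hSN : S ≤ N * (1 / T) := by
    rw [mul_one_div, le_div_iff₀ hTpos]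
    exact hS
  have hSNR : S ≤ N * K ^ (-(1/2) : ℝ) := by
    calc S ≤ N * (1 / T) := hSN
      _ ≤ N * K ^ (-(1/2) : ℝ) := by apply mul_le_mul_of_nonneg_left hinvT hN
  have hg1 : K * N / (2 * K - T) ≤ N / 2 + N * R := by
    have h2KT : (0:ℝ) < 2 * K - T := by linarith
    have key : N / 2 + N * T / (2 * K) - K * N / (2 * K - T)
        = N * T * (K - T) / (2 * K * (2 * K - T)) := by
      field_simp
      ring
    have hpos : 0 ≤ N * T * (K - T) / (2 * K * (2 * K - T)) := by
      apply div_nonneg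
      · apply mul_nonneg (by positivity)
        linarith
      · positivity
    have h1 : K * N / (2 * K - T) ≤ N / 2 + N * T / (2 * K) := by linarith
    have h2 : N * T / (2 * K) ≤ N * R := by
      calc N * T / (2 * K) = N * (T / (2 * K)) := by ring
        _ ≤ N * (K ^ (-(1/2) : ℝ)) := mul_le_mul_of_nonneg_left hTK2 hN
        _ ≤ N * R := mul_le_mul_of_nonneg_left hhalf hN
    linarith
  have hg2 : N * Real.logb 2 (1 + 1 / T) ≤ 2 * (N * R) := by
    have hlb : Real.logb 2 (1 + 1 / T) ≤ 2 * (1 / T) := by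
      rw [Real.logb, div_le_iff₀ (by linarith)]
      have h1 : Real.log (1 + 1 / T) ≤ 1 / T := by
        have := Real.log_le_sub_one_of_pos (show (0:ℝ) < 1 + 1/T by positivity)
        linarith
      have h2 : (1:ℝ)/T ≤ 2 * (1/T) * Real.log 2 := by
        have h3 : 0 ≤ (1/T) * (2 * Real.log 2 - 1) :=
          mul_nonneg (by positivity) (by linarith)
        nlinarith
      linarith
    have hinv2 : 2 * (1 / T) ≤ 2 * R := by
      have : (1:ℝ)/T ≤ R := le_trans hinvT hhalf
      linarith
    calc N * Real.logb 2 (1 + 1 / T) ≤ N * (2 * R) := by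
          apply mul_le_mul_of_nonneg_left (le_trans hlb hinv2) hN
      _ = 2 * (N * R) := by ring
  have hg3 : S * Real.logb 2 T ≤ (9/2) * (N * R) := by
    have hlb : Real.logb 2 T ≤ 2 + Real.log K := by
      rw [Real.logb, div_le_iff₀ (by linarith)]
      nlinarith [mul_nonneg (show (0:ℝ) ≤ 2 + Real.log K by linarith)
        (show (0:ℝ) ≤ Real.log 2 - 1/2 by linarith)]
    have hlb0 : 0 ≤ Real.logb 2 T := Real.logb_nonneg (by norm_num) hT0
    calc S * Real.logb 2 T ≤ (N * K ^ (-(1/2) : ℝ)) * (2 + Real.log K) := by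
          apply mul_le_mul hSNR hlb hlb0
          positivity
      _ = 2 * (N * K ^ (-(1/2) : ℝ)) + N * (K ^ (-(1/2) : ℝ) * Real.log K) := by ring
      _ ≤ 2 * (N * R) + N * ((5/2) * R) := by
          have e1 : N * K ^ (-(1/2) : ℝ) ≤ N * R := mul_le_mul_of_nonneg_left hhalf hN
          have e2 : K ^ (-(1/2) : ℝ) * Real.log K ≤ (5/2) * R := by
            calc K ^ (-(1/2) : ℝ) * Real.log K
                ≤ K ^ (-(1/2) : ℝ) * ((5/2) * K ^ ((2:ℝ)/5)) := by
                  apply mul_le_mul_of_nonneg_left hlogK (by positivity)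
              _ = (5/2) * (K ^ (-(1/2) : ℝ) * K ^ ((2:ℝ)/5)) := by ring
              _ = (5/2) * R := by rw [hmix]
          have e2' : N * (K ^ (-(1/2) : ℝ) * Real.log K) ≤ N * ((5/2) * R) :=
            mul_le_mul_of_nonneg_left e2 hN
          linarith
      _ = (9/2) * (N * R) := by ring
  have hNR : 0 ≤ N * R := by positivity
  calc S * Real.logb 2 T + N * Real.logb 2 (1 + 1 / T) + K * N / (2 * K - T)
      ≤ (9/2) * (N * R) + 2 * (N * R) + (N / 2 + N * R) := by linarith
    _ = N / 2 + (15/2) * (N * R) := by ring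
    _ ≤ N / 2 + 8 * (N * R) := by linarith
    _ = (1 / 2 + 8 * R) * N := by ring

/-- Alon: there is an absolute constant `C > 0` such that for every finite group `G`
and every nonempty `A ⊆ G`, the number of `A`-free subsets of `G` is at most
`2^{(1/2 + C·|A|^{-1/10})·|G|}`. -/
theorem stmt_8 :
    ∃ C : ℝ, 0 < C ∧
      ∀ (G : Type) [Group G] [Fintype G] [DecidableEq G] (A : Finset G),
        A.Nonempty →
        ((Finset.univ.powerset.filter
            (fun S : Finset G => ∀ s₁ ∈ S, ∀ a ∈ A, s₁ * a ∉ S)).card : ℝ)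
          ≤ 2 ^ ((1 / 2 + C * (A.card : ℝ) ^ (-(1 / 10) : ℝ)) * (Fintype.card G : ℝ)) := by
  refine ⟨8, by norm_num, ?_⟩
  intro G _ _ _ A hA
  set k := A.card with hk
  set n := Fintype.card G with hn
  have hk1 : 1 ≤ k := Finset.card_pos.mpr hA
  by_cases hk2 : 2 ≤ k
  case neg =>
    -- k = 1 : trivial bound 2^n suffices
    have hkeq : k = 1 := by omega
    have htriv : ((univ.powerset.filter
        (fun S : Finset G => ∀ s₁ ∈ S, ∀ a ∈ A, s₁ * a ∉ S)).card : ℝ) ≤ (2:ℝ) ^ (n:ℕ) := by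
      have h1 : (univ.powerset.filter
          (fun S : Finset G => ∀ s₁ ∈ S, ∀ a ∈ A, s₁ * a ∉ S)).card ≤
          (univ.powerset : Finset (Finset G)).card := card_filter_le _ _
      rw [card_powerset, card_univ, ← hn] at h1
      exact_mod_cast h1
    have hrw : ((k:ℝ)) ^ (-(1 / 10) : ℝ) = 1 := by
      rw [hkeq]
      simp
    rw [hrw]
    calc ((univ.powerset.filter
        (fun S : Finset G => ∀ s₁ ∈ S, ∀ a ∈ A, s₁ * a ∉ S)).card : ℝ)
        ≤ (2:ℝ) ^ (n:ℕ) := htriv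
      _ = (2:ℝ) ^ ((n:ℝ)) := (Real.rpow_natCast 2 n).symm
      _ ≤ (2:ℝ) ^ ((1 / 2 + 8 * 1) * (n:ℝ)) := by
          apply Real.rpow_le_rpow_of_exponent_le one_le_two
          have : (0:ℝ) ≤ (n:ℝ) := Nat.cast_nonneg n
          nlinarith
  case pos =>
    set t := Nat.sqrt k + 1 with ht
    have ht0 : 0 < t := Nat.succ_pos _
    have htk : t ≤ k := by
      have := Nat.sqrt_lt_self (show 1 < k by omega)
      omega
    -- real versions
    have hK2 : (2:ℝ) ≤ (k:ℝ) := by exact_mod_cast hk2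
    have hK0 : (0:ℝ) < k := by linarith
    have hT1 : Real.sqrt k ≤ (t:ℝ) := by
      have h1 : (k:ℕ) < t ^ 2 := Nat.lt_succ_sqrt' k
      have h2 : (k:ℝ) ≤ (t:ℝ) ^ 2 := by exact_mod_cast h1.le
      calc Real.sqrt k ≤ Real.sqrt ((t:ℝ) ^ 2) := Real.sqrt_le_sqrt h2
        _ = (t:ℝ) := Real.sqrt_sq (Nat.cast_nonneg t)
    have hT2 : (t:ℝ) ≤ 2 * Real.sqrt k := by
      have h1 : (Nat.sqrt k : ℝ) ≤ Real.sqrt k := by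
        have hq : ((Nat.sqrt k : ℝ)) ^ 2 ≤ (k:ℝ) := by exact_mod_cast Nat.sqrt_le' k
        calc (Nat.sqrt k : ℝ) = Real.sqrt ((Nat.sqrt k : ℝ) ^ 2) :=
              (Real.sqrt_sq (Nat.cast_nonneg _)).symm
          _ ≤ Real.sqrt k := Real.sqrt_le_sqrt hq
      have h2 : (1:ℝ) ≤ Real.sqrt k := Real.one_le_sqrt.mpr (by linarith)
      have : (t:ℝ) = (Nat.sqrt k : ℝ) + 1 := by exact_mod_cast rfl
      linarith
    have hTK : (t:ℝ) ≤ (k:ℝ) := by exact_mod_cast htk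
    set s := n / t with hs
    have hsT : (s:ℝ) * (t:ℝ) ≤ (n:ℝ) := by exact_mod_cast Nat.div_mul_le_self n t
    have hsn : s ≤ n := Nat.div_le_self n t
    have htR : (0:ℝ) < (t:ℝ) := by exact_mod_cast ht0
    have h2KT : (0:ℝ) < 2 * (k:ℝ) - (t:ℝ) := by linarith
    set β : ℝ := (k:ℝ) * (n:ℝ) / (2 * (k:ℝ) - (t:ℝ)) with hβ
    -- step 1: combinatorial count
    have step1 : ((univ.powerset.filter
        (fun S : Finset G => ∀ s₁ ∈ S, ∀ a ∈ A, s₁ * a ∉ S)).card : ℝ) ≤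
        ((univ.powerset.filter (fun F : Finset G => F.card ≤ s)).card : ℝ) * (2:ℝ) ^ β := by
      have hc := count_le_sum A t ht0
      have hterm : ∀ F ∈ univ.powerset.filter (fun F : Finset G => F.card ≤ s),
          ((2 ^ (Dset A t F).card : ℕ) : ℝ) ≤ (2:ℝ) ^ β := by
        intro F _
        have hD := Dset_card_bound A t F htk
        have hDR : ((Dset A t F).card : ℝ) * (2 * (k:ℝ) - (t:ℝ)) ≤ (k:ℝ) * (n:ℝ) := by
          have hcast : ((2 * k - t : ℕ) : ℝ) = 2 * (k:ℝ) - (t:ℝ) := by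
            have : t ≤ 2 * k := by omega
            push_cast [Nat.cast_sub this]
            ring
          calc ((Dset A t F).card : ℝ) * (2 * (k:ℝ) - (t:ℝ))
              = (((Dset A t F).card * (2 * k - t) : ℕ) : ℝ) := by
                push_cast [hcast]
                ring
            _ ≤ (((k * n : ℕ)) : ℝ) := by exact_mod_cast hD
            _ = (k:ℝ) * (n:ℝ) := by push_cast; ring
        have hDle : ((Dset A t F).card : ℝ) ≤ β := by
          rw [hβ, le_div_iff₀ h2KT]
          exact hDR
        calc ((2 ^ (Dset A t F).card : ℕ) : ℝ) = (2:ℝ) ^ (((Dset A t F).card : ℕ)) := by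
              push_cast; ring
          _ = (2:ℝ) ^ (((Dset A t F).card : ℝ)) := (Real.rpow_natCast 2 _).symm
          _ ≤ (2:ℝ) ^ β := Real.rpow_le_rpow_of_exponent_le one_le_two hDle
      calc ((univ.powerset.filter
          (fun S : Finset G => ∀ s₁ ∈ S, ∀ a ∈ A, s₁ * a ∉ S)).card : ℝ)
          ≤ ((∑ F ∈ univ.powerset.filter (fun F : Finset G => F.card ≤ s),
              2 ^ (Dset A t F).card : ℕ) : ℝ) := by exact_mod_cast hc
        _ = ∑ F ∈ univ.powerset.filter (fun F : Finset G => F.card ≤ s),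
              ((2 ^ (Dset A t F).card : ℕ) : ℝ) := by push_cast; ring
        _ ≤ ∑ F ∈ univ.powerset.filter (fun F : Finset G => F.card ≤ s), (2:ℝ) ^ β :=
              Finset.sum_le_sum hterm
        _ = ((univ.powerset.filter (fun F : Finset G => F.card ≤ s)).card : ℝ) * (2:ℝ) ^ β := by
              rw [Finset.sum_const, nsmul_eq_mul]
    -- step 2: fingerprint count
    have step2 : ((univ.powerset.filter (fun F : Finset G => F.card ≤ s)).card : ℝ) ≤
        (t:ℝ) ^ s * (1 + 1 / (t:ℝ)) ^ n := by
      calc ((univ.powerset.filter (fun F : Finset G => F.card ≤ s)).card : ℝ)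
          ≤ ∑ j ∈ range (s + 1), ((n.choose j : ℕ) : ℝ) := by
            have := Pf_card_le (G := G) s
            rw [← hn] at this
            exact_mod_cast this
        _ ≤ (t:ℝ) ^ s * (1 + 1 / t) ^ n := sum_choose_le n s t ht0 hsn
    -- rewrite powers as rpow of 2
    have hpow1 : (t:ℝ) ^ s = (2:ℝ) ^ ((s:ℝ) * Real.logb 2 (t:ℝ)) := by
      rw [mul_comm, Real.rpow_mul (by norm_num : (0:ℝ) ≤ 2),
        Real.rpow_logb (by norm_num) (by norm_num) htR, Real.rpow_natCast]
    have hpow2 : (1 + 1 / (t:ℝ)) ^ n = (2:ℝ) ^ ((n:ℝ) * Real.logb 2 (1 + 1 / (t:ℝ))) := by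
      rw [mul_comm, Real.rpow_mul (by norm_num : (0:ℝ) ≤ 2),
        Real.rpow_logb (by norm_num) (by norm_num) (by positivity), Real.rpow_natCast]
    have hexp := exponent_bound (k:ℝ) (n:ℝ) (t:ℝ) (s:ℝ) hK2 (Nat.cast_nonneg n) hTK
      hT1 hT2 (Nat.cast_nonneg s) hsT
    calc ((univ.powerset.filter
        (fun S : Finset G => ∀ s₁ ∈ S, ∀ a ∈ A, s₁ * a ∉ S)).card : ℝ)
        ≤ ((univ.powerset.filter (fun F : Finset G => F.card ≤ s)).card : ℝ) * (2:ℝ) ^ β :=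
          step1
      _ ≤ ((t:ℝ) ^ s * (1 + 1 / (t:ℝ)) ^ n) * (2:ℝ) ^ β := by
          apply mul_le_mul_of_nonneg_right step2 (Real.rpow_nonneg (by norm_num) _)
      _ = (2:ℝ) ^ ((s:ℝ) * Real.logb 2 (t:ℝ) + (n:ℝ) * Real.logb 2 (1 + 1 / (t:ℝ)) + β) := by
          rw [hpow1, hpow2, ← Real.rpow_add (by norm_num : (0:ℝ) < 2),
            ← Real.rpow_add (by norm_num : (0:ℝ) < 2)]
      _ ≤ (2:ℝ) ^ ((1 / 2 + 8 * (k:ℝ) ^ (-(1 / 10) : ℝ)) * (n:ℝ)) := by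
          apply Real.rpow_le_rpow_of_exponent_le one_le_two
          exact hexp
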